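/- (Lemma 1, off-policy Q^π(λ) convergence.) Suppose max_{x} ∑_{a} |π(a|x) − μ(a|x)| ≤ ε with 0 < λ ≤ 1, γ ∈ (0,1) and ε < (1−γ)/(λγ). Then for every Q-function Q and every k ≥ 0, the iterates Q_k = (R^π_λ)^k Q satisfy ‖Q_k − Q^π‖ ≤ η^k ‖Q − Q^π‖ with η = γ(1−λ+λε)/(1−λγ) < 1; in particular Q_k converges to Q^π (exponentially fast) in sup norm. -/

import Mathlib

open scoped BigOperators

noncomputable section

/-- The operator `P^π` on Q-functions. -/
def Pop {X A : Type*} [Fintype X] [Fintype A] (P : X → A → X → ℝ) (π : X → A → ℝ)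
    (Q : X × A → ℝ) : X × A → ℝ :=
  fun p => ∑ y : X, ∑ b : A, P p.1 p.2 y * π y b * Q (y, b)

/-- The Bellman operator `T^π Q = r + γ P^π Q`. -/
def Tpol {X A : Type*} [Fintype X] [Fintype A] (P : X → A → X → ℝ) (π : X → A → ℝ)
    (γ : ℝ) (r : X × A → ℝ) (Q : X × A → ℝ) : X × A → ℝ :=
  r + γ • Pop P π Q

/-- The off-policy corrected λ-operator
`R^π_λ Q = Q + ∑_{t≥0} (λγ)^t (P^μ)^t (T^π Q − Q)`. -/
def Rpi {X A : Type*} [Fintype X] [Fintype A] (P : X → A → X → ℝ) (π μ : X → A → ℝ)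
    (γ lam : ℝ) (r : X × A → ℝ) (Q : X × A → ℝ) : X × A → ℝ :=
  Q + ∑' t : ℕ, (lam * γ) ^ t • (Pop P μ)^[t] (Tpol P π γ r Q - Q)

open Filter Topology

section Aux
variable {X A : Type*} [Fintype X] [Fintype A]

lemma Pop_sub (P : X → A → X → ℝ) (ρ : X → A → ℝ) (f g : X × A → ℝ) :
    Pop P ρ (f - g) = Pop P ρ f - Pop P ρ g := by
  funext p
  simp only [Pop, Pi.sub_apply, ← Finset.sum_sub_distrib]
  refine Finset.sum_congr rfl fun y _ => Finset.sum_congr rfl fun b _ => by ring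

lemma Pop_add (P : X → A → X → ℝ) (ρ : X → A → ℝ) (f g : X × A → ℝ) :
    Pop P ρ (f + g) = Pop P ρ f + Pop P ρ g := by
  funext p
  simp only [Pop, Pi.add_apply, ← Finset.sum_add_distrib]
  refine Finset.sum_congr rfl fun y _ => Finset.sum_congr rfl fun b _ => by ring

lemma Pop_smul (P : X → A → X → ℝ) (ρ : X → A → ℝ) (c : ℝ) (f : X × A → ℝ) :
    Pop P ρ (c • f) = c • Pop P ρ f := by
  funext p
  simp only [Pop, Pi.smul_apply, smul_eq_mul, Finset.mul_sum]
  refine Finset.sum_congr rfl fun y _ => Finset.sum_congr rfl fun b _ => by ring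

lemma Pop_norm_le (P : X → A → X → ℝ) (hP0 : ∀ x a y, 0 ≤ P x a y)
    (hP1 : ∀ x a, ∑ y : X, P x a y = 1)
    (ρ : X → A → ℝ) (hρ0 : ∀ x a, 0 ≤ ρ x a) (hρ1 : ∀ x, ∑ a : A, ρ x a = 1)
    (f : X × A → ℝ) : ‖Pop P ρ f‖ ≤ ‖f‖ := by
  rw [pi_norm_le_iff_of_nonneg (norm_nonneg f)]
  intro p
  rw [Real.norm_eq_abs]
  calc |∑ y : X, ∑ b : A, P p.1 p.2 y * ρ y b * f (y, b)|
      ≤ ∑ y : X, ∑ b : A, |P p.1 p.2 y * ρ y b * f (y, b)| := by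
        refine (Finset.abs_sum_le_sum_abs _ _).trans ?_
        exact Finset.sum_le_sum fun y _ => Finset.abs_sum_le_sum_abs _ _
    _ ≤ ∑ y : X, ∑ b : A, P p.1 p.2 y * ρ y b * ‖f‖ := by
        refine Finset.sum_le_sum fun y _ => Finset.sum_le_sum fun b _ => ?_
        rw [abs_mul, abs_mul, abs_of_nonneg (hP0 _ _ _), abs_of_nonneg (hρ0 _ _),
          mul_assoc, mul_assoc]
        refine mul_le_mul_of_nonneg_left ?_ (hP0 _ _ _)
        exact mul_le_mul_of_nonneg_left (norm_le_pi_norm f (y, b)) (hρ0 _ _)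
    _ = ‖f‖ := by
        have h1 : ∀ y : X, ∑ b : A, P p.1 p.2 y * ρ y b * ‖f‖ = P p.1 p.2 y * ‖f‖ := by
          intro y
          rw [← Finset.sum_mul, ← Finset.mul_sum, hρ1 y, mul_one]
        rw [Finset.sum_congr rfl fun y _ => h1 y, ← Finset.sum_mul, hP1, one_mul]

lemma Pop_diff_norm_le (P : X → A → X → ℝ) (hP0 : ∀ x a y, 0 ≤ P x a y)
    (hP1 : ∀ x a, ∑ y : X, P x a y = 1)
    (π μ : X → A → ℝ) (ε : ℝ) (hε0 : 0 ≤ ε)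
    (hε : ∀ x, ∑ a : A, |π x a - μ x a| ≤ ε)
    (f : X × A → ℝ) : ‖Pop P π f - Pop P μ f‖ ≤ ε * ‖f‖ := by
  rw [pi_norm_le_iff_of_nonneg (mul_nonneg hε0 (norm_nonneg f))]
  intro p
  rw [Real.norm_eq_abs]
  have hdiff : (Pop P π f - Pop P μ f) p
      = ∑ y : X, ∑ b : A, P p.1 p.2 y * (π y b - μ y b) * f (y, b) := by
    simp only [Pop, Pi.sub_apply, ← Finset.sum_sub_distrib]
    refine Finset.sum_congr rfl fun y _ => Finset.sum_congr rfl fun b _ => by ring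
  rw [hdiff]
  calc |∑ y : X, ∑ b : A, P p.1 p.2 y * (π y b - μ y b) * f (y, b)|
      ≤ ∑ y : X, ∑ b : A, |P p.1 p.2 y * (π y b - μ y b) * f (y, b)| := by
        refine (Finset.abs_sum_le_sum_abs _ _).trans ?_
        exact Finset.sum_le_sum fun y _ => Finset.abs_sum_le_sum_abs _ _
    _ ≤ ∑ y : X, ∑ b : A, P p.1 p.2 y * |π y b - μ y b| * ‖f‖ := by
        refine Finset.sum_le_sum fun y _ => Finset.sum_le_sum fun b _ => ?_
        rw [abs_mul, abs_mul, abs_of_nonneg (hP0 _ _ _)]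
        exact mul_le_mul_of_nonneg_left (norm_le_pi_norm f (y, b))
          (mul_nonneg (hP0 _ _ _) (abs_nonneg _))
    _ ≤ ∑ y : X, P p.1 p.2 y * (ε * ‖f‖) := by
        refine Finset.sum_le_sum fun y _ => ?_
        have : ∑ b : A, P p.1 p.2 y * |π y b - μ y b| * ‖f‖
            = P p.1 p.2 y * ((∑ b : A, |π y b - μ y b|) * ‖f‖) := by
          rw [Finset.sum_mul, Finset.mul_sum]
          refine Finset.sum_congr rfl fun b _ => by ring
        rw [this]
        refine mul_le_mul_of_nonneg_left ?_ (hP0 _ _ _)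
        exact mul_le_mul_of_nonneg_right (hε y) (norm_nonneg f)
    _ = ε * ‖f‖ := by
        rw [← Finset.sum_mul, hP1, one_mul]

lemma Pop_iter_add (P : X → A → X → ℝ) (ρ : X → A → ℝ) (t : ℕ) (f g : X × A → ℝ) :
    (Pop P ρ)^[t] (f + g) = (Pop P ρ)^[t] f + (Pop P ρ)^[t] g := by
  induction t generalizing f g with
  | zero => simp
  | succ n ih =>
    rw [Function.iterate_succ_apply, Function.iterate_succ_apply,
      Function.iterate_succ_apply, Pop_add, ih]

lemma Pop_iter_sub (P : X → A → X → ℝ) (ρ : X → A → ℝ) (t : ℕ) (f g : X × A → ℝ) :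
    (Pop P ρ)^[t] (f - g) = (Pop P ρ)^[t] f - (Pop P ρ)^[t] g := by
  induction t generalizing f g with
  | zero => simp
  | succ n ih =>
    rw [Function.iterate_succ_apply, Function.iterate_succ_apply,
      Function.iterate_succ_apply, Pop_sub, ih]

lemma Pop_iter_smul (P : X → A → X → ℝ) (ρ : X → A → ℝ) (t : ℕ) (c : ℝ) (f : X × A → ℝ) :
    (Pop P ρ)^[t] (c • f) = c • (Pop P ρ)^[t] f := by
  induction t generalizing f with
  | zero => simp
  | succ n ih =>
    rw [Function.iterate_succ_apply, Function.iterate_succ_apply, Pop_smul, ih]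

lemma Pop_iter_norm_le (P : X → A → X → ℝ) (hP0 : ∀ x a y, 0 ≤ P x a y)
    (hP1 : ∀ x a, ∑ y : X, P x a y = 1)
    (ρ : X → A → ℝ) (hρ0 : ∀ x a, 0 ≤ ρ x a) (hρ1 : ∀ x, ∑ a : A, ρ x a = 1)
    (t : ℕ) (f : X × A → ℝ) : ‖(Pop P ρ)^[t] f‖ ≤ ‖f‖ := by
  induction t generalizing f with
  | zero => simp
  | succ n ih =>
    rw [Function.iterate_succ_apply]
    exact (ih _).trans (Pop_norm_le P hP0 hP1 ρ hρ0 hρ1 f)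

lemma geom_smul_summable (P : X → A → X → ℝ) (hP0 : ∀ x a y, 0 ≤ P x a y)
    (hP1 : ∀ x a, ∑ y : X, P x a y = 1)
    (ρ : X → A → ℝ) (hρ0 : ∀ x a, 0 ≤ ρ x a) (hρ1 : ∀ x, ∑ a : A, ρ x a = 1)
    (q : ℝ) (hq0 : 0 ≤ q) (hq1 : q < 1) (g : X × A → ℝ) :
    Summable (fun t : ℕ => q ^ t • (Pop P ρ)^[t] g) := by
  refine Summable.of_norm_bounded
    ((summable_geometric_of_lt_one hq0 hq1).mul_right ‖g‖) fun t => ?_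
  rw [norm_smul, Real.norm_eq_abs, abs_of_nonneg (pow_nonneg hq0 t)]
  exact mul_le_mul_of_nonneg_left (Pop_iter_norm_le P hP0 hP1 ρ hρ0 hρ1 t g)
    (pow_nonneg hq0 t)

set_option maxHeartbeats 1000000 in
lemma step_contraction (P : X → A → X → ℝ)
    (hP0 : ∀ x a y, 0 ≤ P x a y) (hP1 : ∀ x a, ∑ y : X, P x a y = 1)
    (π μ : X → A → ℝ)
    (hπ0 : ∀ x a, 0 ≤ π x a) (hπ1 : ∀ x, ∑ a : A, π x a = 1)
    (hμ0 : ∀ x a, 0 ≤ μ x a) (hμ1 : ∀ x, ∑ a : A, μ x a = 1)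
    (ε : ℝ) (hε0 : 0 ≤ ε) (hε : ∀ x, ∑ a : A, |π x a - μ x a| ≤ ε)
    (γ : ℝ) (hγ0 : 0 < γ) (hγ1 : γ < 1)
    (lam : ℝ) (hl0 : 0 < lam) (hl1 : lam ≤ 1)
    (r : X × A → ℝ) (Qπ : X × A → ℝ)
    (hQπ : Qπ = r + γ • Pop P π Qπ)
    (Q' : X × A → ℝ) :
    ‖Rpi P π μ γ lam r Q' - Qπ‖ ≤
      (γ * (1 - lam + lam * ε) / (1 - lam * γ)) * ‖Q' - Qπ‖ := by
  have hq0 : 0 ≤ lam * γ := le_of_lt (mul_pos hl0 hγ0)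
  have hq1 : lam * γ < 1 := by nlinarith
  have hr : Qπ - r = γ • Pop P π Qπ := by nth_rewrite 1 [hQπ]; abel
  have hT : Tpol P π γ r Q' - Q' = γ • Pop P π (Q' - Qπ) - (Q' - Qπ) := by
    rw [Pop_sub, smul_sub]
    unfold Tpol
    rw [← hr]; abel
  -- summability
  have sumC : Summable (fun t : ℕ => (lam * γ) ^ t •
      (Pop P μ)^[t] (γ • Pop P π (Q' - Qπ) - (lam * γ) • Pop P μ (Q' - Qπ))) :=
    geom_smul_summable P hP0 hP1 μ hμ0 hμ1 _ hq0 hq1 _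
  have sumh : Summable (fun t : ℕ => (lam * γ) ^ t • (Pop P μ)^[t] (Q' - Qπ)) :=
    geom_smul_summable P hP0 hP1 μ hμ0 hμ1 _ hq0 hq1 _
  have sumhs : Summable (fun t : ℕ => (lam * γ) ^ (t + 1) • (Pop P μ)^[t + 1] (Q' - Qπ)) :=
    (summable_nat_add_iff 1).2 sumh
  -- pointwise decomposition of the summand
  have hg : ∀ t : ℕ, (lam * γ) ^ t • (Pop P μ)^[t] (Tpol P π γ r Q' - Q') =
      (lam * γ) ^ t •
        (Pop P μ)^[t] (γ • Pop P π (Q' - Qπ) - (lam * γ) • Pop P μ (Q' - Qπ)) +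
      ((lam * γ) ^ (t + 1) • (Pop P μ)^[t + 1] (Q' - Qπ) -
        (lam * γ) ^ t • (Pop P μ)^[t] (Q' - Qπ)) := by
    intro t
    rw [hT]
    simp only [Pop_iter_sub, Pop_iter_smul, Function.iterate_succ_apply, smul_sub,
      smul_smul, pow_succ]
    abel
  -- the key identity
  have key : Rpi P π μ γ lam r Q' - Qπ = ∑' t : ℕ, (lam * γ) ^ t •
      (Pop P μ)^[t] (γ • Pop P π (Q' - Qπ) - (lam * γ) • Pop P μ (Q' - Qπ)) := by
    have h1 : (∑' t : ℕ, (lam * γ) ^ t • (Pop P μ)^[t] (Tpol P π γ r Q' - Q')) =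
        (∑' t : ℕ, (lam * γ) ^ t •
          (Pop P μ)^[t] (γ • Pop P π (Q' - Qπ) - (lam * γ) • Pop P μ (Q' - Qπ))) +
          ((∑' t : ℕ, (lam * γ) ^ (t + 1) • (Pop P μ)^[t + 1] (Q' - Qπ)) -
            ∑' t : ℕ, (lam * γ) ^ t • (Pop P μ)^[t] (Q' - Qπ)) := by
      rw [← Summable.tsum_sub sumhs sumh, ← Summable.tsum_add sumC (sumhs.sub sumh)]
      exact tsum_congr hg
    have h2 := Summable.tsum_eq_zero_add sumh
    rw [pow_zero, Function.iterate_zero_apply, one_smul] at h2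
    unfold Rpi
    rw [h1, h2]
    abel
  -- norm bound on C
  have hC : ‖γ • Pop P π (Q' - Qπ) - (lam * γ) • Pop P μ (Q' - Qπ)‖ ≤
      γ * (1 - lam + lam * ε) * ‖Q' - Qπ‖ := by
    have hsplit : γ • Pop P π (Q' - Qπ) - (lam * γ) • Pop P μ (Q' - Qπ)
        = (γ - lam * γ) • Pop P π (Q' - Qπ) +
          (lam * γ) • (Pop P π (Q' - Qπ) - Pop P μ (Q' - Qπ)) := by
      rw [smul_sub, sub_smul]; abel
    rw [hsplit]
    calc ‖(γ - lam * γ) • Pop P π (Q' - Qπ) +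
          (lam * γ) • (Pop P π (Q' - Qπ) - Pop P μ (Q' - Qπ))‖
        ≤ ‖(γ - lam * γ) • Pop P π (Q' - Qπ)‖ +
          ‖(lam * γ) • (Pop P π (Q' - Qπ) - Pop P μ (Q' - Qπ))‖ := norm_add_le _ _
      _ ≤ (γ - lam * γ) * ‖Q' - Qπ‖ + lam * γ * (ε * ‖Q' - Qπ‖) := by
          have hγq : (0:ℝ) ≤ γ - lam * γ := by nlinarith
          gcongr
          · rw [norm_smul, Real.norm_eq_abs, abs_of_nonneg hγq]
            exact mul_le_mul_of_nonneg_left (Pop_norm_le P hP0 hP1 π hπ0 hπ1 _) hγq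
          · rw [norm_smul, Real.norm_eq_abs, abs_of_nonneg hq0]
            exact mul_le_mul_of_nonneg_left
              (Pop_diff_norm_le P hP0 hP1 π μ ε hε0 hε _) hq0
      _ = γ * (1 - lam + lam * ε) * ‖Q' - Qπ‖ := by ring
  -- norm bound on the tsum
  rw [key]
  calc ‖∑' t : ℕ, (lam * γ) ^ t •
        (Pop P μ)^[t] (γ • Pop P π (Q' - Qπ) - (lam * γ) • Pop P μ (Q' - Qπ))‖
      ≤ ∑' t : ℕ, ‖(lam * γ) ^ t •
        (Pop P μ)^[t] (γ • Pop P π (Q' - Qπ) - (lam * γ) • Pop P μ (Q' - Qπ))‖ :=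
        norm_tsum_le_tsum_norm sumC.norm
    _ ≤ ∑' t : ℕ, (lam * γ) ^ t *
        ‖γ • Pop P π (Q' - Qπ) - (lam * γ) • Pop P μ (Q' - Qπ)‖ := by
        refine Summable.tsum_le_tsum (fun t => ?_) sumC.norm
          ((summable_geometric_of_lt_one hq0 hq1).mul_right _)
        rw [norm_smul, Real.norm_eq_abs, abs_of_nonneg (pow_nonneg hq0 t)]
        exact mul_le_mul_of_nonneg_left
          (Pop_iter_norm_le P hP0 hP1 μ hμ0 hμ1 t _) (pow_nonneg hq0 t)
    _ = (1 - lam * γ)⁻¹ * ‖γ • Pop P π (Q' - Qπ) - (lam * γ) • Pop P μ (Q' - Qπ)‖ := by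
        rw [tsum_mul_right, tsum_geometric_of_lt_one hq0 hq1, mul_comm]
    _ ≤ (1 - lam * γ)⁻¹ * (γ * (1 - lam + lam * ε) * ‖Q' - Qπ‖) := by
        refine mul_le_mul_of_nonneg_left hC (inv_nonneg.2 (by linarith))
    _ = (γ * (1 - lam + lam * ε) / (1 - lam * γ)) * ‖Q' - Qπ‖ := by
        ring

end Aux


/-- Lemma 1: if μ is ε-away from π, `0 < λ ≤ 1`, `γ ∈ (0,1)` and
`ε < (1−γ)/(λγ)`, then with `η = γ(1−λ+λε)/(1−λγ)` we have `η < 1`, the iterates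
`Q_k = (R^π_λ)^k Q` satisfy `‖Q_k − Q^π‖ ≤ η^k ‖Q − Q^π‖`, and `Q_k → Q^π`. -/
theorem stmt8 {X A : Type*} [Fintype X] [Fintype A] [Nonempty X] [Nonempty A]
    (P : X → A → X → ℝ)
    (hP0 : ∀ x a y, 0 ≤ P x a y) (hP1 : ∀ x a, ∑ y : X, P x a y = 1)
    (π μ : X → A → ℝ)
    (hπ0 : ∀ x a, 0 ≤ π x a) (hπ1 : ∀ x, ∑ a : A, π x a = 1)
    (hμ0 : ∀ x a, 0 ≤ μ x a) (hμ1 : ∀ x, ∑ a : A, μ x a = 1)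
    (ε : ℝ) (hε : ∀ x, ∑ a : A, |π x a - μ x a| ≤ ε)
    (γ : ℝ) (hγ0 : 0 < γ) (hγ1 : γ < 1)
    (lam : ℝ) (hl0 : 0 < lam) (hl1 : lam ≤ 1)
    (hεlt : ε < (1 - γ) / (lam * γ))
    (r : X × A → ℝ) (Qπ : X × A → ℝ)
    (hQπ : Qπ = r + γ • Pop P π Qπ)
    (Q : X × A → ℝ) :
    γ * (1 - lam + lam * ε) / (1 - lam * γ) < 1 ∧
    (∀ k : ℕ,
      ‖(Rpi P π μ γ lam r)^[k] Q - Qπ‖ ≤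
        (γ * (1 - lam + lam * ε) / (1 - lam * γ)) ^ k * ‖Q - Qπ‖) ∧
    Tendsto (fun k : ℕ => (Rpi P π μ γ lam r)^[k] Q) atTop (𝓝 Qπ) := by
  have hε0 : 0 ≤ ε := le_trans (Finset.sum_nonneg fun a _ => abs_nonneg _)
    (hε (Classical.arbitrary X))
  have hd : 0 < 1 - lam * γ := by nlinarith
  have hnum : γ * (1 - lam + lam * ε) < 1 - lam * γ := by
    have h := (lt_div_iff₀ (mul_pos hl0 hγ0)).1 hεlt
    nlinarith
  have hη1 : γ * (1 - lam + lam * ε) / (1 - lam * γ) < 1 := (div_lt_one hd).2 hnum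
  have hη0 : 0 ≤ γ * (1 - lam + lam * ε) / (1 - lam * γ) :=
    div_nonneg (by nlinarith [mul_nonneg hl0.le hε0]) (le_of_lt hd)
  have hstep := step_contraction P hP0 hP1 π μ hπ0 hπ1 hμ0 hμ1 ε hε0 hε γ hγ0 hγ1
    lam hl0 hl1 r Qπ hQπ
  have hiter : ∀ k : ℕ, ‖(Rpi P π μ γ lam r)^[k] Q - Qπ‖ ≤
      (γ * (1 - lam + lam * ε) / (1 - lam * γ)) ^ k * ‖Q - Qπ‖ := by
    intro k
    induction k with
    | zero => simp
    | succ n ih =>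
      rw [Function.iterate_succ_apply']
      calc ‖Rpi P π μ γ lam r ((Rpi P π μ γ lam r)^[n] Q) - Qπ‖
          ≤ (γ * (1 - lam + lam * ε) / (1 - lam * γ)) *
            ‖(Rpi P π μ γ lam r)^[n] Q - Qπ‖ := hstep _
        _ ≤ (γ * (1 - lam + lam * ε) / (1 - lam * γ)) *
            ((γ * (1 - lam + lam * ε) / (1 - lam * γ)) ^ n * ‖Q - Qπ‖) :=
            mul_le_mul_of_nonneg_left ih hη0
        _ = (γ * (1 - lam + lam * ε) / (1 - lam * γ)) ^ (n + 1) * ‖Q - Qπ‖ := by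
            rw [pow_succ]; ring
  refine ⟨hη1, hiter, ?_⟩
  rw [tendsto_iff_norm_sub_tendsto_zero]
  have hlim : Filter.Tendsto
      (fun k : ℕ => (γ * (1 - lam + lam * ε) / (1 - lam * γ)) ^ k * ‖Q - Qπ‖)
      Filter.atTop (nhds 0) := by
    have := (tendsto_pow_atTop_nhds_zero_of_lt_one hη0 hη1).mul_const ‖Q - Qπ‖
    simpa using this
  exact squeeze_zero (fun k => norm_nonneg _) hiter hlim
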